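/- Let f ∈ 𝓕_m and g ∈ 𝓕_n be subtypes and σ a permutation of [m]. Then: (i) f* is a subtype with I_{f*} = O_f and O_{f*} = I_f; (ii) f∘σ is a subtype with I_{f∘σ} = σ⁻¹(I_f) and O_{f∘σ} = σ⁻¹(O_f); (iii) f⊗g, f⅋g, f◁g and g◁f are subtypes in 𝓕_{m+n}, each with input set I_f ∪ {m + i : i ∈ I_g} and output set O_f ∪ {m + j : j ∈ O_g}. -/

import Mathlib

open Classical

namespace HOT

/-- Binary strings of length `n`, identified with `{0,1}^n`. -/
abbrev Str (n : ℕ) := Fin n → Bool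

/-- The all-zeros string `θ`. -/
def theta (n : ℕ) : Str n := fun _ => false

/-- `𝓕_n`: boolean functions on `{0,1}^n` with `f(θ) = 1`. -/
def Fcal (n : ℕ) : Set (Str n → Bool) := {f | f (theta n) = true}

/-- The complement `f* = 1 - f + p_n`. -/
noncomputable def star {n : ℕ} (f : Str n → Bool) : Str n → Bool :=
  fun s => if s = theta n then true else !(f s)

/-- First block `s¹` of a string `s ∈ {0,1}^{m+n}`. -/
def fstStr {m n : ℕ} (s : Str (m + n)) : Str m := fun i => s (Fin.castAdd n i)

/-- Second block `s²` of a string `s ∈ {0,1}^{m+n}`. -/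
def sndStr {m n : ℕ} (s : Str (m + n)) : Str n := fun j => s (Fin.natAdd m j)

/-- Tensor product `(f ⊗ g)(s) = f(s¹) · g(s²)`. -/
noncomputable def tensor {m n : ℕ} (f : Str m → Bool) (g : Str n → Bool) :
    Str (m + n) → Bool :=
  fun s => f (fstStr s) && g (sndStr s)

/-- `f ⅋ g := (f* ⊗ g*)*`. -/
noncomputable def parr {m n : ℕ} (f : Str m → Bool) (g : Str n → Bool) :
    Str (m + n) → Bool :=
  star (tensor (star f) (star g))

/-- The causal product `f ◁ g` (`f` on the first `m` bits, `g` on the last `n` bits):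
`(f ◁ g)(s) = f(s¹)` if `s¹ ≠ θ_m`, else `g(s²)`. -/
noncomputable def causalL {m n : ℕ} (f : Str m → Bool) (g : Str n → Bool) :
    Str (m + n) → Bool :=
  fun s => if fstStr s = theta m then g (sndStr s) else f (fstStr s)

/-- The causal product `g ◁ f` (`f` on the first `m` bits, `g` on the last `n` bits):
`(g ◁ f)(s) = g(s²)` if `s² ≠ θ_n`, else `f(s¹)`. -/
noncomputable def causalR {m n : ℕ} (f : Str m → Bool) (g : Str n → Bool) :
    Str (m + n) → Bool :=
  fun s => if sndStr s = theta n then f (fstStr s) else g (sndStr s)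

/-- `p_T(s) = 1` iff `s_i = 0` for all `i ∈ T`. -/
noncomputable def pSet {n : ℕ} (T : Set (Fin n)) : Str n → Bool :=
  fun s => decide (∀ i ∈ T, s i = false)

/-- The string `e^i` with `1` exactly in position `i`. -/
def eStr {n : ℕ} (i : Fin n) : Str n := fun j => decide (j = i)

/-- The string `e^{i,j}` with `1` exactly in positions `i` and `j`. -/
def e2Str {n : ℕ} (i j : Fin n) : Str n := fun l => decide (l = i ∨ l = j)

/-- Input indices `I_f = {i : f(e^i) = 0}`. -/
def Iset {n : ℕ} (f : Str n → Bool) : Set (Fin n) := {i | f (eStr i) = false}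

/-- Output indices `O_f = {j : f(e^j) = 1}`. -/
def Oset {n : ℕ} (f : Str n → Bool) : Set (Fin n) := {j | f (eStr j) = true}

/-- `f` is a subtype if `p_{I_f} ≤ f ≤ (p_{O_f})*` pointwise. -/
def IsSubtype {n : ℕ} (f : Str n → Bool) : Prop :=
  pSet (Iset f) ≤ f ∧ f ≤ star (pSet (Oset f))

/-- The partial order `≤_O`: `s ≤_O t` iff `s_i ≤ t_i` for `i ∈ O` and `s_i ≥ t_i` for
`i ∉ O`. -/
def leO {n : ℕ} (O : Set (Fin n)) (s t : Str n) : Prop :=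
  ∀ i, (i ∈ O → s i ≤ t i) ∧ (i ∉ O → t i ≤ s i)

/-- `f` is monotone (with respect to `≤_{O_f}`). -/
def MonotoneF {n : ℕ} (f : Str n → Bool) : Prop :=
  ∀ s t, leO (Oset f) s t → f s ≤ f t

/-- The action of a permutation on strings: `σ(s)_i = s_{σ⁻¹(i)}`. -/
def permAct {n : ℕ} (σ : Equiv.Perm (Fin n)) (s : Str n) : Str n := fun i => s (σ⁻¹ i)

/-- `(f ∘ σ)(s) = f(σ(s))`. -/
def permComp {n : ℕ} (f : Str n → Bool) (σ : Equiv.Perm (Fin n)) : Str n → Bool :=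
  fun s => f (permAct σ s)

/-- The inductively defined family `𝓣_n` of type functions. -/
inductive IsType : (n : ℕ) → (Str n → Bool) → Prop
  | one : IsType 1 (fun _ => true)
  | dual {n : ℕ} {f : Str n → Bool} : IsType n f → IsType n (star f)
  | perm {n : ℕ} {f : Str n → Bool} (σ : Equiv.Perm (Fin n)) :
      IsType n f → IsType n (permComp f σ)
  | tens {m n : ℕ} {f : Str m → Bool} {g : Str n → Bool} :
      IsType m f → IsType n g → IsType (m + n) (tensor f g)

/-- Interpretation of a bit as an integer. -/
def toZ (b : Bool) : ℤ := (b.toNat : ℤ)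

/-- `f` is a chain type: `f = Σ_{i=0}^N (-1)^i p_{S_i}` for a strictly increasing chain
`S_0 ⊊ ⋯ ⊊ S_N ⊆ [n]` with `N` even. -/
def IsChainType {n : ℕ} (f : Str n → Bool) : Prop :=
  ∃ N : ℕ, Even N ∧ ∃ S : Fin (N + 1) → Set (Fin n), StrictMono S ∧
    ∀ s : Str n, toZ (f s) = ∑ i : Fin (N + 1), (-1 : ℤ) ^ (i : ℕ) * toZ (pSet (S i) s)

/-- The Möbius transform `f̂_T`. -/
noncomputable def mobius {n : ℕ} (f : Str n → Bool) (T : Set (Fin n)) : ℤ :=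
  ∑ s : Str n, if ∀ j, j ∉ T → s j = true then
    (-1 : ℤ) ^ (∑ j : Fin n, if j ∈ T then (s j).toNat else 0) * toZ (f s)
  else 0

/-- The structure poset `𝓟_f = {T ⊆ [n] : f̂_T ≠ 0}`, ordered by inclusion. -/
noncomputable def structPoset {n : ℕ} (f : Str n → Bool) : Set (Set (Fin n)) :=
  {T | mobius f T ≠ 0}

/-- The label set `L_T = T ∖ ⋃ {S ∈ 𝓟_f : S ⊊ T}`. -/
noncomputable def labels {n : ℕ} (f : Str n → Bool) (T : Set (Fin n)) : Set (Fin n) :=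
  T \ ⋃₀ {S | S ∈ structPoset f ∧ S ⊂ T}

/-- The reduced structure poset `𝓟_f^0`: `∅` (if `∅ ∈ 𝓟_f`) together with all
`T ∈ 𝓟_f` with `L_T ≠ ∅`. -/
noncomputable def reducedPoset {n : ℕ} (f : Str n → Bool) : Set (Set (Fin n)) :=
  {T | T ∈ structPoset f ∧ (T = ∅ ∨ labels f T ≠ ∅)}

/-- The rank `ρ_f(T)`: the length of a longest chain in `𝓟_f` with top element `T`
(this is the length of any maximal such chain in the graded poset `𝓟_f`). -/
noncomputable def rank {n : ℕ} (f : Str n → Bool) (T : Set (Fin n)) : ℕ :=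
  sSup {k | ∃ c : Fin (k + 1) → Set (Fin n), StrictMono c ∧
    (∀ i, c i ∈ structPoset f) ∧ c (Fin.last k) = T}

/-- The rank `r(f)` of the whole poset `𝓟_f`: the common length of its maximal chains. -/
noncomputable def rk {n : ℕ} (f : Str n → Bool) : ℕ :=
  sSup {k | ∃ c : Fin (k + 1) → Set (Fin n), StrictMono c ∧ ∀ i, c i ∈ structPoset f}

/-- `𝕋_i^f = {T ∈ 𝓟_f : i ∈ L_T}`. -/
noncomputable def Tset {n : ℕ} (f : Str n → Bool) (i : Fin n) : Set (Set (Fin n)) :=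
  {T | T ∈ structPoset f ∧ i ∈ labels f T}

/-- The rank `r_f(i)` of an index: the common rank of elements of `𝕋_i^f`, or `r(f)+1`
if `𝕋_i^f = ∅` (a free output). -/
noncomputable def idxRank {n : ℕ} (f : Str n → Bool) (i : Fin n) : ℕ :=
  if (Tset f i).Nonempty then sSup (rank f '' Tset f i) else rk f + 1

/-- `X` is the greatest lower bound of `S` and `T` in the poset `(P, ⊆)`. -/
def IsGLBIn {n : ℕ} (P : Set (Set (Fin n))) (S T X : Set (Fin n)) : Prop :=
  X ∈ P ∧ X ⊆ S ∧ X ⊆ T ∧ ∀ Y ∈ P, Y ⊆ S → Y ⊆ T → Y ⊆ X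

/-- `X` is the least upper bound of `S` and `T` in the poset `(P, ⊆)`. -/
def IsLUBIn {n : ℕ} (P : Set (Set (Fin n))) (S T X : Set (Fin n)) : Prop :=
  X ∈ P ∧ S ⊆ X ∧ T ⊆ X ∧ ∀ Y ∈ P, S ⊆ Y → T ⊆ Y → X ⊆ Y

/-- `S^↓`: the downset generated by `S` in `𝓟_f^0`. -/
noncomputable def downSet {n : ℕ} (f : Str n → Bool) (S : Set (Fin n)) :
    Set (Set (Fin n)) :=
  {X | X ∈ reducedPoset f ∧ X ⊆ S}

/-- `S^↑`: the upset generated by `S` in `𝓟_f^0`. -/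
noncomputable def upSet {n : ℕ} (f : Str n → Bool) (S : Set (Fin n)) :
    Set (Set (Fin n)) :=
  {X | X ∈ reducedPoset f ∧ S ⊆ X}

/-- The pair rank `r_f(i,j)`: `max{ρ_f(S ∧ T) : S ∈ 𝕋_i^f, T ∈ 𝕋_j^f, S ∧ T exists in 𝓟_f}`;
`-1` if this set is empty, unless `i` or `j` is a free output, in which case it is
`min{r_f(i), r_f(j)}`. -/
noncomputable def pairRank {n : ℕ} (f : Str n → Bool) (i j : Fin n) : ℤ :=
  if _h : ∃ r : ℤ, ∃ S ∈ Tset f i, ∃ T ∈ Tset f j, ∃ X, IsGLBIn (structPoset f) S T X ∧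
      r = (rank f X : ℤ) then
    sSup {r : ℤ | ∃ S ∈ Tset f i, ∃ T ∈ Tset f j, ∃ X, IsGLBIn (structPoset f) S T X ∧
      r = (rank f X : ℤ)}
  else if Tset f i = ∅ ∨ Tset f j = ∅ then
    min (idxRank f i : ℤ) (idxRank f j : ℤ)
  else -1

/-- Membership in the sublattice generated by a set `S`. -/
inductive InLatGen {α : Type*} [Lattice α] (S : Set α) : α → Prop
  | base {a : α} : a ∈ S → InLatGen S a
  | sup {a b : α} : InLatGen S a → InLatGen S b → InLatGen S (a ⊔ b)
  | inf {a b : α} : InLatGen S a → InLatGen S b → InLatGen S (a ⊓ b)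

/-- For `s ≰_O θ`, `f_s` is the function with support `U_s ∪ U_θ` (w.r.t. `≤_O`). -/
noncomputable def fStr {n : ℕ} (O : Set (Fin n)) (s : Str n) : Str n → Bool :=
  fun t => decide (leO O s t ∨ leO O (theta n) t)

/-- A string `s ∉ D_θ ∪ U_θ` is basic (for `≤_O`) if `s_j = 1` for exactly one `j ∈ O`
and `s_i = 0` for at most one `i ∈ I = Oᶜ`. -/
def IsBasic {n : ℕ} (O : Set (Fin n)) (s : Str n) : Prop :=
  ¬ leO O s (theta n) ∧ ¬ leO O (theta n) s ∧
  (∃! j, j ∈ O ∧ s j = true) ∧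
  (∀ i i', i ∈ Oᶜ → i' ∈ Oᶜ → s i = false → s i' = false → i = i')

section StmtSixHelpers

variable {m n : ℕ}

lemma bool_le_iff' {a b : Bool} : a ≤ b ↔ (a = true → b = true) := by
  cases a <;> cases b <;> simp

lemma eStr_ne_theta (i : Fin n) : eStr i ≠ theta n := fun h => by
  simpa [eStr, theta] using congrFun h i

/-- Condition A: vanishing on inputs forces value 1. -/
def CondA {n : ℕ} (f : Str n → Bool) : Prop :=
  ∀ s, (∀ i ∈ Iset f, s i = false) → f s = true

/-- Condition B: a nonzero string vanishing on outputs forces value 0. -/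
def CondB {n : ℕ} (f : Str n → Bool) : Prop :=
  ∀ s, s ≠ theta n → (∀ j ∈ Oset f, s j = false) → f s = false

lemma isSubtype_iff (f : Str n → Bool) : IsSubtype f ↔ CondA f ∧ CondB f := by
  unfold IsSubtype CondA CondB
  constructor
  · rintro ⟨h1, h2⟩
    constructor
    · intro s hs
      have := h1 s
      rw [bool_le_iff'] at this
      apply this
      simp only [pSet, decide_eq_true_eq]
      exact hs
    · intro s hsθ hs
      by_contra hfs
      have hfs' : f s = true := by simpa using hfs
      have h2' := (bool_le_iff'.mp (h2 s)) hfs'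
      rw [star, if_neg hsθ] at h2'
      simp only [pSet, Bool.not_eq_true', decide_eq_false_iff_not] at h2'
      exact h2' hs
  · rintro ⟨hA, hB⟩
    constructor
    · intro s
      rw [bool_le_iff']
      intro hp
      apply hA
      simpa [pSet] using hp
    · intro s
      rw [bool_le_iff']
      intro hfs
      rw [star]
      by_cases hsθ : s = theta n
      · rw [if_pos hsθ]
      · rw [if_neg hsθ]
        simp only [pSet, Bool.not_eq_true', decide_eq_false_iff_not]
        intro hv
        rw [hB s hsθ hv] at hfs
        exact Bool.false_ne_true hfs

/- ### star -/

lemma star_eStr (f : Str n → Bool) (i : Fin n) : star f (eStr i) = !f (eStr i) := by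
  rw [star, if_neg (eStr_ne_theta i)]

lemma Iset_star (f : Str n → Bool) : Iset (star f) = Oset f := by
  ext i; simp [Iset, Oset, star_eStr]

lemma Oset_star (f : Str n → Bool) : Oset (star f) = Iset f := by
  ext i; simp [Iset, Oset, star_eStr]

lemma star_isSubtype {f : Str n → Bool} (hfs : IsSubtype f) : IsSubtype (star f) := by
  obtain ⟨hA, hB⟩ := (isSubtype_iff f).mp hfs
  rw [isSubtype_iff]
  constructor
  · intro s hs
    rw [Iset_star] at hs
    rw [star]
    by_cases hsθ : s = theta n
    · rw [if_pos hsθ]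
    · rw [if_neg hsθ, hB s hsθ hs]; rfl
  · intro s hsθ hs
    rw [Oset_star] at hs
    rw [star, if_neg hsθ, hA s hs]; rfl

/- ### permutation -/

lemma permAct_eStr (σ : Equiv.Perm (Fin n)) (i : Fin n) :
    permAct σ (eStr i) = eStr (σ i) := by
  funext j
  simp only [permAct, eStr]
  congr 1
  rw [eq_iff_iff, Equiv.Perm.inv_def, Equiv.symm_apply_eq, eq_comm]

lemma permComp_eStr (f : Str n → Bool) (σ : Equiv.Perm (Fin n)) (i : Fin n) :
    permComp f σ (eStr i) = f (eStr (σ i)) := by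
  rw [permComp, permAct_eStr]

lemma Iset_perm (f : Str n → Bool) (σ : Equiv.Perm (Fin n)) :
    Iset (permComp f σ) = ⇑σ ⁻¹' Iset f := by
  ext i; simp [Iset, permComp_eStr, Set.mem_preimage]

lemma Oset_perm (f : Str n → Bool) (σ : Equiv.Perm (Fin n)) :
    Oset (permComp f σ) = ⇑σ ⁻¹' Oset f := by
  ext i; simp [Oset, permComp_eStr, Set.mem_preimage]

lemma permAct_ne_theta {σ : Equiv.Perm (Fin n)} {s : Str n} (h : s ≠ theta n) :
    permAct σ s ≠ theta n := by
  intro hc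
  apply h
  funext k
  have := congrFun hc (σ k)
  simpa [permAct, theta] using this

lemma perm_isSubtype {f : Str n → Bool} (hfs : IsSubtype f) (σ : Equiv.Perm (Fin n)) :
    IsSubtype (permComp f σ) := by
  obtain ⟨hA, hB⟩ := (isSubtype_iff f).mp hfs
  rw [isSubtype_iff]
  constructor
  · intro s hs
    rw [Iset_perm] at hs
    apply hA
    intro i hi
    have : σ⁻¹ i ∈ ⇑σ ⁻¹' Iset f := by
      simp only [Set.mem_preimage, Equiv.Perm.inv_def, Equiv.apply_symm_apply]
      exact hi
    exact hs _ this
  · intro s hsθ hs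
    rw [Oset_perm] at hs
    apply hB _ (permAct_ne_theta hsθ)
    intro j hj
    have : σ⁻¹ j ∈ ⇑σ ⁻¹' Oset f := by
      simp only [Set.mem_preimage, Equiv.Perm.inv_def, Equiv.apply_symm_apply]
      exact hj
    exact hs _ this

/- ### splitting Fin (m+n) -/

lemma cases_add (k : Fin (m + n)) :
    (∃ i, k = Fin.castAdd n i) ∨ (∃ j, k = Fin.natAdd m j) :=
  Fin.addCases (motive := fun k => (∃ i, k = Fin.castAdd n i) ∨ (∃ j, k = Fin.natAdd m j))
    (fun i => Or.inl ⟨i, rfl⟩) (fun j => Or.inr ⟨j, rfl⟩) k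

lemma castAdd_ne_natAdd (i : Fin m) (j : Fin n) :
    Fin.castAdd n i ≠ Fin.natAdd m j := by
  have hlt := i.isLt
  intro hc
  have hv : (Fin.castAdd n i : ℕ) = (Fin.natAdd m j : ℕ) := congrArg Fin.val hc
  rw [Fin.coe_castAdd, Fin.coe_natAdd] at hv
  omega

lemma fstStr_eStr_castAdd (i : Fin m) :
    fstStr (eStr (Fin.castAdd n i)) = eStr i := by
  funext j
  simp [fstStr, eStr, Fin.ext_iff]

lemma sndStr_eStr_castAdd (i : Fin m) :
    sndStr (eStr (Fin.castAdd n i)) = theta n := by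
  have hi := i.isLt
  funext j
  simp only [sndStr, eStr, theta, decide_eq_false_iff_not, Fin.ext_iff,
    Fin.coe_natAdd, Fin.coe_castAdd]
  omega

lemma fstStr_eStr_natAdd (j : Fin n) :
    fstStr (eStr (Fin.natAdd m j) : Str (m + n)) = theta m := by
  funext i
  have hi := i.isLt
  simp only [fstStr, eStr, theta, decide_eq_false_iff_not, Fin.ext_iff,
    Fin.coe_natAdd, Fin.coe_castAdd]
  omega

lemma sndStr_eStr_natAdd (j : Fin n) :
    sndStr (eStr (Fin.natAdd m j) : Str (m + n)) = eStr j := by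
  funext i
  simp [sndStr, eStr, Fin.ext_iff]

lemma eq_theta_iff (s : Str (m + n)) :
    s = theta (m + n) ↔ fstStr s = theta m ∧ sndStr s = theta n := by
  constructor
  · rintro rfl; exact ⟨rfl, rfl⟩
  · rintro ⟨h1, h2⟩
    funext k
    rcases cases_add k with ⟨i, rfl⟩ | ⟨j, rfl⟩
    · exact congrFun h1 i
    · exact congrFun h2 j

lemma mem_union_cast {A : Set (Fin m)} {B : Set (Fin n)} (i : Fin m) :
    Fin.castAdd n i ∈ Fin.castAdd n '' A ∪ Fin.natAdd m '' B ↔ i ∈ A := by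
  constructor
  · rintro (⟨i', hi', he⟩ | ⟨j', hj', he⟩)
    · have : i' = i := by
        simpa [Fin.ext_iff] using he
      rwa [this] at hi'
    · exact absurd he.symm (castAdd_ne_natAdd i j')
  · intro h
    exact Or.inl ⟨i, h, rfl⟩

lemma mem_union_nat {A : Set (Fin m)} {B : Set (Fin n)} (j : Fin n) :
    Fin.natAdd m j ∈ Fin.castAdd n '' A ∪ Fin.natAdd m '' B ↔ j ∈ B := by
  constructor
  · rintro (⟨i', hi', he⟩ | ⟨j', hj', he⟩)
    · exact absurd he (castAdd_ne_natAdd i' j)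
    · have : j' = j := by
        simpa [Fin.ext_iff] using he
      rwa [this] at hj'
  · intro h
    exact Or.inr ⟨j, h, rfl⟩

lemma IO_prod {h : Str (m + n) → Bool} {f : Str m → Bool} {g : Str n → Bool}
    (h1 : ∀ i, h (eStr (Fin.castAdd n i)) = f (eStr i))
    (h2 : ∀ j, h (eStr (Fin.natAdd m j)) = g (eStr j)) :
    Iset h = Fin.castAdd n '' Iset f ∪ Fin.natAdd m '' Iset g ∧
    Oset h = Fin.castAdd n '' Oset f ∪ Fin.natAdd m '' Oset g := by
  constructor <;> ext k <;> rcases cases_add k with ⟨i, rfl⟩ | ⟨j, rfl⟩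
  · rw [mem_union_cast]; simp [Iset, h1]
  · rw [mem_union_nat]; simp [Iset, h2]
  · rw [mem_union_cast]; simp [Oset, h1]
  · rw [mem_union_nat]; simp [Oset, h2]

lemma vanish_split {s : Str (m + n)} {A : Set (Fin m)} {B : Set (Fin n)}
    (hs : ∀ k ∈ (Fin.castAdd n '' A ∪ Fin.natAdd m '' B : Set (Fin (m + n))),
      s k = false) :
    (∀ i ∈ A, fstStr s i = false) ∧ (∀ j ∈ B, sndStr s j = false) :=
  ⟨fun i hi => hs _ (Or.inl ⟨i, hi, rfl⟩), fun j hj => hs _ (Or.inr ⟨j, hj, rfl⟩)⟩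

end StmtSixHelpers

section StmtSixProducts

variable {m n : ℕ} {f : Str m → Bool} {g : Str n → Bool}

lemma star_theta (f : Str n → Bool) : star f (theta n) = true := by
  rw [star, if_pos rfl]

lemma tensor_eStr_cast (hg : g (theta n) = true) (i : Fin m) :
    tensor f g (eStr (Fin.castAdd n i)) = f (eStr i) := by
  rw [tensor, fstStr_eStr_castAdd, sndStr_eStr_castAdd, hg, Bool.and_true]

lemma tensor_eStr_nat (hf : f (theta m) = true) (j : Fin n) :
    tensor f g (eStr (Fin.natAdd m j)) = g (eStr j) := by
  rw [tensor, fstStr_eStr_natAdd, sndStr_eStr_natAdd, hf, Bool.true_and]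

lemma parr_eStr_cast (i : Fin m) :
    parr f g (eStr (Fin.castAdd n i)) = f (eStr i) := by
  rw [parr, star, if_neg (eStr_ne_theta _), tensor, fstStr_eStr_castAdd,
    sndStr_eStr_castAdd, star_theta, Bool.and_true, star_eStr, Bool.not_not]

lemma parr_eStr_nat (j : Fin n) :
    parr f g (eStr (Fin.natAdd m j)) = g (eStr j) := by
  rw [parr, star, if_neg (eStr_ne_theta _), tensor, fstStr_eStr_natAdd,
    sndStr_eStr_natAdd, star_theta, Bool.true_and, star_eStr, Bool.not_not]

lemma causalL_eStr_cast (i : Fin m) :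
    causalL f g (eStr (Fin.castAdd n i)) = f (eStr i) := by
  rw [causalL, fstStr_eStr_castAdd, if_neg (eStr_ne_theta i)]

lemma causalL_eStr_nat (j : Fin n) :
    causalL f g (eStr (Fin.natAdd m j)) = g (eStr j) := by
  rw [causalL, fstStr_eStr_natAdd, if_pos rfl, sndStr_eStr_natAdd]

lemma causalR_eStr_cast (i : Fin m) :
    causalR f g (eStr (Fin.castAdd n i)) = f (eStr i) := by
  rw [causalR, sndStr_eStr_castAdd, if_pos rfl, fstStr_eStr_castAdd]

lemma causalR_eStr_nat (j : Fin n) :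
    causalR f g (eStr (Fin.natAdd m j)) = g (eStr j) := by
  rw [causalR, sndStr_eStr_natAdd, if_neg (eStr_ne_theta j)]

lemma tensor_isSubtype (hfs : IsSubtype f) (hgs : IsSubtype g)
    (hf : f (theta m) = true) (hg : g (theta n) = true) :
    IsSubtype (tensor f g) := by
  obtain ⟨hfA, hfB⟩ := (isSubtype_iff f).mp hfs
  obtain ⟨hgA, hgB⟩ := (isSubtype_iff g).mp hgs
  obtain ⟨hI, hO⟩ := IO_prod (tensor_eStr_cast (f := f) hg) (tensor_eStr_nat (g := g) hf)
  rw [isSubtype_iff]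
  constructor
  · intro s hs
    rw [hI] at hs
    obtain ⟨h1, h2⟩ := vanish_split hs
    rw [tensor, hfA _ h1, hgA _ h2, Bool.and_true]
  · intro s hsθ hs
    rw [hO] at hs
    obtain ⟨h1, h2⟩ := vanish_split hs
    have hnot : ¬(fstStr s = theta m ∧ sndStr s = theta n) :=
      fun hc => hsθ ((eq_theta_iff s).mpr hc)
    rcases not_and_or.mp hnot with hc | hc
    · rw [tensor, hfB _ hc h1, Bool.false_and]
    · rw [tensor, hgB _ hc h2, Bool.and_false]

lemma parr_isSubtype (hfs : IsSubtype f) (hgs : IsSubtype g) :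
    IsSubtype (parr f g) := by
  obtain ⟨hfA, hfB⟩ := (isSubtype_iff f).mp hfs
  obtain ⟨hgA, hgB⟩ := (isSubtype_iff g).mp hgs
  obtain ⟨hI, hO⟩ := IO_prod (parr_eStr_cast (f := f) (g := g)) (parr_eStr_nat (f := f) (g := g))
  rw [isSubtype_iff]
  constructor
  · intro s hs
    rw [hI] at hs
    obtain ⟨h1, h2⟩ := vanish_split hs
    rw [parr, star]
    by_cases hsθ : s = theta (m + n)
    · rw [if_pos hsθ]
    · rw [if_neg hsθ]
      have hnot : ¬(fstStr s = theta m ∧ sndStr s = theta n) :=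
        fun hc => hsθ ((eq_theta_iff s).mpr hc)
      rcases not_and_or.mp hnot with hc | hc
      · rw [tensor, star, if_neg hc, hfA _ h1, Bool.not_true, Bool.false_and,
          Bool.not_false]
      · rw [tensor]
        conv_lhs => rw [show star g (sndStr s) = false by
          rw [star, if_neg hc, hgA _ h2, Bool.not_true]]
        rw [Bool.and_false, Bool.not_false]
  · intro s hsθ hs
    rw [hO] at hs
    obtain ⟨h1, h2⟩ := vanish_split hs
    have e1 : star f (fstStr s) = true := by
      by_cases hc : fstStr s = theta m
      · rw [star, if_pos hc]
      · rw [star, if_neg hc, hfB _ hc h1, Bool.not_false]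
    have e2 : star g (sndStr s) = true := by
      by_cases hc : sndStr s = theta n
      · rw [star, if_pos hc]
      · rw [star, if_neg hc, hgB _ hc h2, Bool.not_false]
    rw [parr, star, if_neg hsθ, tensor, e1, e2, Bool.and_true, Bool.not_true]

lemma causalL_isSubtype (hfs : IsSubtype f) (hgs : IsSubtype g) :
    IsSubtype (causalL f g) := by
  obtain ⟨hfA, hfB⟩ := (isSubtype_iff f).mp hfs
  obtain ⟨hgA, hgB⟩ := (isSubtype_iff g).mp hgs
  obtain ⟨hI, hO⟩ := IO_prod (causalL_eStr_cast (f := f) (g := g))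
    (causalL_eStr_nat (f := f) (g := g))
  rw [isSubtype_iff]
  constructor
  · intro s hs
    rw [hI] at hs
    obtain ⟨h1, h2⟩ := vanish_split hs
    rw [causalL]
    by_cases hc : fstStr s = theta m
    · rw [if_pos hc]; exact hgA _ h2
    · rw [if_neg hc]; exact hfA _ h1
  · intro s hsθ hs
    rw [hO] at hs
    obtain ⟨h1, h2⟩ := vanish_split hs
    rw [causalL]
    by_cases hc : fstStr s = theta m
    · rw [if_pos hc]
      have hc2 : sndStr s ≠ theta n :=
        fun hc2 => hsθ ((eq_theta_iff s).mpr ⟨hc, hc2⟩)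
      exact hgB _ hc2 h2
    · rw [if_neg hc]; exact hfB _ hc h1

lemma causalR_isSubtype (hfs : IsSubtype f) (hgs : IsSubtype g) :
    IsSubtype (causalR f g) := by
  obtain ⟨hfA, hfB⟩ := (isSubtype_iff f).mp hfs
  obtain ⟨hgA, hgB⟩ := (isSubtype_iff g).mp hgs
  obtain ⟨hI, hO⟩ := IO_prod (causalR_eStr_cast (f := f) (g := g))
    (causalR_eStr_nat (f := f) (g := g))
  rw [isSubtype_iff]
  constructor
  · intro s hs
    rw [hI] at hs
    obtain ⟨h1, h2⟩ := vanish_split hs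
    rw [causalR]
    by_cases hc : sndStr s = theta n
    · rw [if_pos hc]; exact hfA _ h1
    · rw [if_neg hc]; exact hgA _ h2
  · intro s hsθ hs
    rw [hO] at hs
    obtain ⟨h1, h2⟩ := vanish_split hs
    rw [causalR]
    by_cases hc : sndStr s = theta n
    · rw [if_pos hc]
      have hc2 : fstStr s ≠ theta m :=
        fun hc2 => hsθ ((eq_theta_iff s).mpr ⟨hc2, hc⟩)
      exact hfB _ hc2 h1
    · rw [if_neg hc]; exact hgB _ hc h2

end StmtSixProducts

/-- closure of subtypes under complement, permutation and the products,
with the corresponding input/output sets. -/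
theorem stmt6 {m n : ℕ} (f : Str m → Bool) (g : Str n → Bool)
    (hf : f ∈ Fcal m) (hg : g ∈ Fcal n)
    (hfs : IsSubtype f) (hgs : IsSubtype g) (σ : Equiv.Perm (Fin m)) :
    (IsSubtype (star f) ∧ Iset (star f) = Oset f ∧ Oset (star f) = Iset f) ∧
    (IsSubtype (permComp f σ) ∧ Iset (permComp f σ) = ⇑σ ⁻¹' Iset f ∧
      Oset (permComp f σ) = ⇑σ ⁻¹' Oset f) ∧
    (∀ h ∈ ({tensor f g, parr f g, causalL f g, causalR f g} :
        Set (Str (m + n) → Bool)),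
      IsSubtype h ∧
      Iset h = Fin.castAdd n '' Iset f ∪ Fin.natAdd m '' Iset g ∧
      Oset h = Fin.castAdd n '' Oset f ∪ Fin.natAdd m '' Oset g) := by
  have hftheta : f (theta m) = true := hf
  have hgtheta : g (theta n) = true := hg
  refine ⟨⟨star_isSubtype hfs, Iset_star f, Oset_star f⟩,
    ⟨perm_isSubtype hfs σ, Iset_perm f σ, Oset_perm f σ⟩, ?_⟩
  intro h hh
  simp only [Set.mem_insert_iff, Set.mem_singleton_iff] at hh
  rcases hh with rfl | rfl | rfl | rfl
  · exact ⟨tensor_isSubtype hfs hgs hftheta hgtheta,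
      (IO_prod (tensor_eStr_cast hgtheta) (tensor_eStr_nat hftheta)).1,
      (IO_prod (tensor_eStr_cast hgtheta) (tensor_eStr_nat hftheta)).2⟩
  · exact ⟨parr_isSubtype hfs hgs,
      (IO_prod (parr_eStr_cast (f := f) (g := g)) (parr_eStr_nat (f := f) (g := g))).1,
      (IO_prod (parr_eStr_cast (f := f) (g := g)) (parr_eStr_nat (f := f) (g := g))).2⟩
  · exact ⟨causalL_isSubtype hfs hgs,
      (IO_prod (causalL_eStr_cast (f := f) (g := g)) (causalL_eStr_nat (f := f) (g := g))).1,
      (IO_prod (causalL_eStr_cast (f := f) (g := g)) (causalL_eStr_nat (f := f) (g := g))).2⟩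
  · exact ⟨causalR_isSubtype hfs hgs,
      (IO_prod (causalR_eStr_cast (f := f) (g := g)) (causalR_eStr_nat (f := f) (g := g))).1,
      (IO_prod (causalR_eStr_cast (f := f) (g := g)) (causalR_eStr_nat (f := f) (g := g))).2⟩


end HOT
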